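/- Let (M_n) be a sequence of positive reals with M_0 = 1 of moderate growth and satisfying (⋆). Then for all p, q ∈ ℕ with q ≥ 1 there exist constants C, D > 0 such that (M_n)^{p/q} ≤ C D^n M_{⌊np/q⌋} for every n ∈ ℕ₀. -/
import Mathlib

private lemma aux_low (M : ℕ → ℝ) (hpos : ∀ n, 0 < M n) (h0 : M 0 = 1)
    (b : ℝ) (hb : 0 < b)
    (hstar : ∀ n k : ℕ, b ^ (n + k) * M n * M k ≤ M (n + k)) :
    ∀ n j : ℕ, (min b 1) ^ (j * j * n) * M n ^ j ≤ M (j * n) := by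
  have hb' : 0 < min b 1 := lt_min hb one_pos
  have hb1 : min b 1 ≤ 1 := min_le_right _ _
  intro n j
  induction j with
  | zero => simp [h0]
  | succ j ih =>
    have h1 : b ^ (j * n + n) * M (j * n) * M n ≤ M (j * n + n) := hstar (j * n) n
    have h2 : (min b 1) ^ (j * n + n) ≤ b ^ (j * n + n) :=
      pow_le_pow_left₀ hb'.le (min_le_left _ _) _
    have h3 : (min b 1) ^ ((j+1) * (j+1) * n) ≤ (min b 1) ^ (j * n + n + j * j * n) := by
      apply pow_le_pow_of_le_one hb'.le hb1
      nlinarith [Nat.zero_le (j * n)]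
    calc (min b 1) ^ ((j+1) * (j+1) * n) * M n ^ (j+1)
        ≤ (min b 1) ^ (j * n + n + j * j * n) * M n ^ (j+1) := by
          apply mul_le_mul_of_nonneg_right h3 (pow_nonneg (hpos n).le _)
      _ = (min b 1) ^ (j * n + n) * ((min b 1) ^ (j * j * n) * M n ^ j) * M n := by
          rw [pow_add]; ring
      _ ≤ b ^ (j * n + n) * ((min b 1) ^ (j * j * n) * M n ^ j) * M n := by
          apply mul_le_mul_of_nonneg_right (mul_le_mul_of_nonneg_right h2
            (mul_nonneg (pow_nonneg hb'.le _) (pow_nonneg (hpos n).le _))) (hpos n).le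
      _ ≤ b ^ (j * n + n) * M (j * n) * M n := by
          apply mul_le_mul_of_nonneg_right (mul_le_mul_of_nonneg_left ih (pow_nonneg hb.le _)) (hpos n).le
      _ ≤ M (j * n + n) := h1
      _ = M ((j+1) * n) := by rw [Nat.succ_mul]

private lemma aux_high (M : ℕ → ℝ) (hpos : ∀ n, 0 < M n) (h0 : M 0 = 1)
    (B : ℝ) (hB : 0 < B)
    (hmg : ∀ n k : ℕ, M (n + k) ≤ B ^ (n + k) * M n * M k) :
    ∀ n j : ℕ, M (j * n) ≤ (max B 1) ^ (j * j * n) * M n ^ j := by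
  have hB' : 0 < max B 1 := lt_max_of_lt_right one_pos
  have hB1 : 1 ≤ max B 1 := le_max_right _ _
  intro n j
  induction j with
  | zero => simp [h0]
  | succ j ih =>
    have h1 : M (j * n + n) ≤ B ^ (j * n + n) * M (j * n) * M n := hmg (j * n) n
    have h2 : B ^ (j * n + n) ≤ (max B 1) ^ (j * n + n) :=
      pow_le_pow_left₀ hB.le (le_max_left _ _) _
    have h3 : (max B 1) ^ (j * n + n + j * j * n) ≤ (max B 1) ^ ((j+1) * (j+1) * n) := by
      apply pow_le_pow_right₀ hB1
      nlinarith [Nat.zero_le (j * n)]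
    calc M ((j+1) * n) = M (j * n + n) := by rw [Nat.succ_mul]
      _ ≤ B ^ (j * n + n) * M (j * n) * M n := h1
      _ ≤ (max B 1) ^ (j * n + n) * M (j * n) * M n := by
          apply mul_le_mul_of_nonneg_right (mul_le_mul_of_nonneg_right h2 (hpos _).le) (hpos n).le
      _ ≤ (max B 1) ^ (j * n + n) * ((max B 1) ^ (j * j * n) * M n ^ j) * M n := by
          apply mul_le_mul_of_nonneg_right (mul_le_mul_of_nonneg_left ih (pow_nonneg hB'.le _)) (hpos n).le
      _ = (max B 1) ^ (j * n + n + j * j * n) * M n ^ (j+1) := by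
          rw [pow_add]; ring
      _ ≤ (max B 1) ^ ((j+1) * (j+1) * n) * M n ^ (j+1) := by
          apply mul_le_mul_of_nonneg_right h3 (pow_nonneg (hpos n).le _)

theorem stmt_9 (M : ℕ → ℝ) (hpos : ∀ n, 0 < M n) (h0 : M 0 = 1)
    (B : ℝ) (hB : 0 < B)
    (hmg : ∀ n k : ℕ, M (n + k) ≤ B ^ (n + k) * M n * M k)
    (b : ℝ) (hb : 0 < b)
    (hstar : ∀ n k : ℕ, b ^ (n + k) * M n * M k ≤ M (n + k)) :
    ∀ p q : ℕ, 1 ≤ q → ∃ C > 0, ∃ D > 0, ∀ n : ℕ,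
      (M n) ^ ((p : ℝ) / q) ≤ C * D ^ n * M (n * p / q) := by
  intro p q hq
  have hq0 : (q : ℝ) ≠ 0 := Nat.cast_ne_zero.mpr (by omega)
  have hqpos : (0 : ℝ) < q := Nat.cast_pos.mpr (by omega)
  have hb' : 0 < min b 1 := lt_min hb one_pos
  have hB' : 0 < max B 1 := lt_max_of_lt_right one_pos
  have hB1 : 1 ≤ max B 1 := le_max_right _ _
  set R : ℝ := ∑ i ∈ Finset.range q, M i with hR
  have hRpos : 0 < R := Finset.sum_pos (fun i _ => hpos i) (by simp; omega)
  set K : ℝ := (max B 1) ^ (p + q * q * p) / (min b 1) ^ (p * p) with hK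
  have hKpos : 0 < K := by positivity
  have hD1 : 1 ≤ max K 1 := le_max_right _ _
  refine ⟨R ^ ((q:ℝ)⁻¹), by positivity, max K 1, lt_max_of_lt_right one_pos, ?_⟩
  intro n
  set m := n * p / q with hm
  set r := n * p % q with hr
  have hdm : q * m + r = n * p := Nat.div_add_mod (n * p) q
  have key : M n ^ p ≤ K ^ n * R * M m ^ q := by
    have hlow := aux_low M hpos h0 b hb hstar n p
    have hhigh := aux_high M hpos h0 B hB hmg m q
    have hMrR : M r ≤ R := by
      have : r < q := Nat.mod_lt _ (by omega)
      exact Finset.single_le_sum (f := M) (fun i _ => (hpos i).le) (Finset.mem_range.mpr this)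
    have hmle : m ≤ n * p := Nat.div_le_self _ _
    have hpn : M (p * n) ≤ (max B 1) ^ (n * p) * ((max B 1) ^ (q * q * m) * M m ^ q) * R := by
      have e : p * n = q * m + r := by rw [hdm, Nat.mul_comm]
      rw [e]
      calc M (q * m + r) ≤ B ^ (q * m + r) * M (q * m) * M r := hmg (q * m) r
        _ ≤ (max B 1) ^ (n * p) * ((max B 1) ^ (q * q * m) * M m ^ q) * R := by
            apply mul_le_mul _ hMrR (hpos r).le
              (mul_nonneg (pow_nonneg hB'.le _) (mul_nonneg (pow_nonneg hB'.le _) (pow_nonneg (hpos m).le _)))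
            apply mul_le_mul _ hhigh (hpos _).le (pow_nonneg hB'.le _)
            rw [hdm]
            exact pow_le_pow_left₀ hB.le (le_max_left _ _) _
    have hBexp : (max B 1) ^ (n * p) * (max B 1) ^ (q * q * m) ≤ (max B 1) ^ ((p + q * q * p) * n) := by
      rw [← pow_add]
      apply pow_le_pow_right₀ hB1
      have h := Nat.mul_le_mul_left (q * q) hmle
      nlinarith [h]
    have key0 : (min b 1) ^ (p * p * n) * M n ^ p ≤ (max B 1) ^ ((p + q * q * p) * n) * R * M m ^ q := by
      calc (min b 1) ^ (p * p * n) * M n ^ p ≤ M (p * n) := hlow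
        _ ≤ (max B 1) ^ (n * p) * ((max B 1) ^ (q * q * m) * M m ^ q) * R := hpn
        _ = ((max B 1) ^ (n * p) * (max B 1) ^ (q * q * m)) * (M m ^ q * R) := by ring
        _ ≤ (max B 1) ^ ((p + q * q * p) * n) * (M m ^ q * R) := by
            apply mul_le_mul_of_nonneg_right hBexp (mul_nonneg (pow_nonneg (hpos m).le _) hRpos.le)
        _ = (max B 1) ^ ((p + q * q * p) * n) * R * M m ^ q := by ring
    have hKn : K ^ n = (max B 1) ^ ((p + q * q * p) * n) / (min b 1) ^ (p * p * n) := by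
      rw [hK, div_pow, ← pow_mul, ← pow_mul]
    rw [hKn, div_mul_eq_mul_div, div_mul_eq_mul_div, le_div_iff₀ (pow_pos hb' _)]
    calc M n ^ p * (min b 1) ^ (p * p * n) = (min b 1) ^ (p * p * n) * M n ^ p := by ring
      _ ≤ (max B 1) ^ ((p + q * q * p) * n) * R * M m ^ q := key0
  -- now take q-th roots via rpow
  have expand : M n ^ ((p:ℝ) / q) = (M n ^ p) ^ ((q:ℝ)⁻¹) := by
    rw [← Real.rpow_natCast (M n) p, ← Real.rpow_mul (hpos n).le, div_eq_mul_inv]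
  rw [expand]
  have step1 : (M n ^ p) ^ ((q:ℝ)⁻¹) ≤ (K ^ n * R * M m ^ q) ^ ((q:ℝ)⁻¹) :=
    Real.rpow_le_rpow (pow_nonneg (hpos n).le _) key (by positivity)
  have step2 : (K ^ n * R * M m ^ q) ^ ((q:ℝ)⁻¹)
      = (K ^ n) ^ ((q:ℝ)⁻¹) * R ^ ((q:ℝ)⁻¹) * (M m ^ q) ^ ((q:ℝ)⁻¹) := by
    rw [Real.mul_rpow (mul_nonneg (pow_nonneg hKpos.le _) hRpos.le) (pow_nonneg (hpos m).le _),
      Real.mul_rpow (pow_nonneg hKpos.le _) hRpos.le]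
  have step3 : (M m ^ q) ^ ((q:ℝ)⁻¹) = M m := by
    rw [← Real.rpow_natCast (M m) q, ← Real.rpow_mul (hpos m).le, mul_inv_cancel₀ hq0, Real.rpow_one]
  have step4 : (K ^ n) ^ ((q:ℝ)⁻¹) ≤ (max K 1) ^ n := by
    rw [← Real.rpow_natCast K n, ← Real.rpow_mul hKpos.le]
    calc K ^ ((n:ℝ) * (q:ℝ)⁻¹) ≤ (max K 1) ^ ((n:ℝ) * (q:ℝ)⁻¹) :=
          Real.rpow_le_rpow hKpos.le (le_max_left _ _) (by positivity)
      _ ≤ (max K 1) ^ ((n:ℝ)) := by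
          apply Real.rpow_le_rpow_of_exponent_le hD1
          calc (n:ℝ) * (q:ℝ)⁻¹ ≤ (n:ℝ) * 1 := by
                apply mul_le_mul_of_nonneg_left _ (Nat.cast_nonneg n)
                rw [inv_le_one_iff₀]
                right
                exact_mod_cast hq
            _ = (n:ℝ) := mul_one _
      _ = (max K 1) ^ n := Real.rpow_natCast _ n
  calc (M n ^ p) ^ ((q:ℝ)⁻¹) ≤ (K ^ n * R * M m ^ q) ^ ((q:ℝ)⁻¹) := step1
    _ = (K ^ n) ^ ((q:ℝ)⁻¹) * R ^ ((q:ℝ)⁻¹) * M m := by rw [step2, step3]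
    _ ≤ (max K 1) ^ n * R ^ ((q:ℝ)⁻¹) * M m := by
        apply mul_le_mul_of_nonneg_right (mul_le_mul_of_nonneg_right step4 (Real.rpow_nonneg hRpos.le _)) (hpos m).le
    _ = R ^ ((q:ℝ)⁻¹) * (max K 1) ^ n * M m := by ring
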